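/- Let G_i, i ∈ ℕ, be an increasing sequence of continua (compact connected sets) in ℝⁿ with sup_i H¹(G_i) < ∞, where H¹ denotes 1-dimensional Hausdorff measure. Let G = ⋃_{i∈ℕ} G_i. Then H¹(closure(G) ∖ G) = 0. -/

import Mathlib

open MeasureTheory
open Metric Set Filter
open scoped ENNReal Topology

lemma key_length {n : ℕ} {s : Set (EuclideanSpace ℝ (Fin n))} (hs : IsPreconnected s)
    {y z : EuclideanSpace ℝ (Fin n)} (hy : y ∈ s) (hz : z ∈ s) {r : ℝ}
    (hr : r ≤ dist y z) :
    ENNReal.ofReal r ≤ μH[1] (s ∩ Metric.closedBall y r) := by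
  have hIcc : Set.Icc (0:ℝ) r ⊆ (fun p => dist y p) '' (s ∩ Metric.closedBall y r) := by
    intro t ht
    have himg : IsPreconnected ((fun p => dist y p) '' s) :=
      hs.image _ (Continuous.continuousOn (by fun_prop))
    have h0 : (0:ℝ) ∈ (fun p => dist y p) '' s := ⟨y, hy, by simp⟩
    have hd : dist y z ∈ (fun p => dist y p) '' s := ⟨z, hz, rfl⟩
    have ht' : t ∈ (fun p => dist y p) '' s :=
      himg.Icc_subset h0 hd ⟨ht.1, ht.2.trans hr⟩
    obtain ⟨p, hp, hpt⟩ := ht'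
    refine ⟨p, ⟨hp, ?_⟩, hpt⟩
    simp only at hpt
    rw [Metric.mem_closedBall, dist_comm, hpt]
    exact ht.2
  calc ENNReal.ofReal r = μH[1] (Set.Icc (0:ℝ) r) := by
        rw [MeasureTheory.hausdorffMeasure_real, Real.volume_Icc, sub_zero]
    _ ≤ μH[1] ((fun p => dist y p) '' (s ∩ Metric.closedBall y r)) := measure_mono hIcc
    _ ≤ (1 : ℝ≥0∞) ^ (1:ℝ) * μH[1] (s ∩ Metric.closedBall y r) := by
        simpa using (LipschitzWith.dist_right y).hausdorffMeasure_image_le zero_le_one _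
    _ = μH[1] (s ∩ Metric.closedBall y r) := by simp

lemma diam_cb {n : ℕ} (x : EuclideanSpace ℝ (Fin n)) (R : ℝ) :
    EMetric.diam (Metric.closedBall x R) ≤ ENNReal.ofReal (2 * R) := by
  rcases le_or_gt 0 R with hR | hR
  · refine EMetric.diam_le fun a ha b hb => ?_
    rw [edist_dist]
    exact ENNReal.ofReal_le_ofReal <| by
      have := dist_triangle a x b
      have h1 := Metric.mem_closedBall.1 ha
      have h2 : dist x b ≤ R := by rw [dist_comm]; exact Metric.mem_closedBall.1 hb
      linarith
  · rw [Metric.closedBall_eq_empty.2 hR]; exact (le_of_eq Metric.ediam_empty).trans zero_le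

/-- If `Gᵢ`, `i ∈ ℕ`, is an increasing sequence of continua in `ℝⁿ` with
`sup_i H¹(Gᵢ) < ∞` and `G = ⋃ᵢ Gᵢ`, then `H¹(closure G ∖ G) = 0`. -/
theorem stmt_13 {n : ℕ} (G : ℕ → Set (EuclideanSpace ℝ (Fin n)))
    (hcompact : ∀ i, IsCompact (G i)) (hconn : ∀ i, IsConnected (G i))
    (hmono : Monotone G) (hsup : (⨆ i, μH[1] (G i)) < ⊤) :
    μH[1] (closure (⋃ i, G i) \ ⋃ i, G i) = 0 := by
  classical
  set μ : Measure (EuclideanSpace ℝ (Fin n)) := μH[1] with hμ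
  set U : Set (EuclideanSpace ℝ (Fin n)) := ⋃ i, G i with hU
  set S : Set (EuclideanSpace ℝ (Fin n)) := closure U \ U with hS
  set M : ℝ≥0∞ := ⨆ i, μ (G i) with hM
  rcases S.eq_empty_or_nonempty with hSe | hSne
  · rw [hSe]; exact measure_empty
  have hGmeas : ∀ i, MeasurableSet (G i) := fun i => (hcompact i).measurableSet
  have hUmeas : MeasurableSet U := MeasurableSet.iUnion hGmeas
  have hGU : ∀ i, G i ⊆ U := fun i => subset_iUnion G i
  have hGle : ∀ i, μ (G i) ≤ M := fun i => le_iSup (fun i => μ (G i)) i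
  have hUM : μ U = M := by
    rw [hU, hmono.measure_iUnion]
  have hUfin : μ U ≠ ⊤ := by rw [hUM]; exact hsup.ne
  -- a base point
  obtain ⟨g₀, hg₀⟩ := (hconn 0).nonempty
  have hg₀i : ∀ i, g₀ ∈ G i := fun i => hmono (Nat.zero_le i) hg₀
  -- boundedness: every point of `U` is within `M.toReal` of `g₀`
  have hbound : ∀ q ∈ U, dist g₀ q ≤ M.toReal := by
    intro q hq
    obtain ⟨i, hqi⟩ := mem_iUnion.1 hq
    have h1 : ENNReal.ofReal (dist g₀ q) ≤ μ (G i) :=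
      le_trans (key_length (hconn i).isPreconnected (hg₀i i) hqi le_rfl)
        (measure_mono inter_subset_left)
    have h2 : ENNReal.ofReal (dist g₀ q) ≤ M := h1.trans (hGle i)
    rw [← ENNReal.ofReal_toReal hsup.ne] at h2
    exact (ENNReal.ofReal_le_ofReal_iff ENNReal.toReal_nonneg).1 h2
  have hboundc : ∀ p ∈ closure U, dist g₀ p ≤ M.toReal := by
    intro p hp
    have : closure U ⊆ Metric.closedBall g₀ M.toReal := by
      apply closure_minimal _ Metric.isClosed_closedBall
      intro q hq
      rw [Metric.mem_closedBall, dist_comm]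
      exact hbound q hq
    rw [dist_comm]
    exact this hp
  -- the per-k radius function
  set rad : ℕ → EuclideanSpace ℝ (Fin n) → ℝ := fun k p => Metric.infDist p (G k) / 6 with hrad
  have hradpos : ∀ k, ∀ p ∈ S, 0 < rad k p := by
    intro k p hp
    have hpk : p ∉ G k := fun h => hp.2 (hGU k h)
    have := ((hcompact k).isClosed.notMem_iff_infDist_pos (hconn k).nonempty).1 hpk
    positivity
  have hradle : ∀ k, ∀ p ∈ S, rad k p ≤ M.toReal := by
    intro k p hp
    have h1 : Metric.infDist p (G k) ≤ dist p g₀ := Metric.infDist_le_dist_of_mem (hg₀i k)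
    have h2 : dist p g₀ ≤ M.toReal := by rw [dist_comm]; exact hboundc p hp.1
    have h3 : 0 < rad k p := hradpos k p hp
    rw [hrad]; dsimp only
    nlinarith [ENNReal.toReal_nonneg (a := M)]
  -- Vitali: for each k choose a disjoint subfamily
  have hvit : ∀ k : ℕ, ∃ u ⊆ S,
      (u.PairwiseDisjoint fun p => Metric.closedBall p (rad k p)) ∧
      ∀ a ∈ S, ∃ b ∈ u, Metric.closedBall a (rad k a) ⊆ Metric.closedBall b (4 * rad k b) := by
    intro k
    exact Vitali.exists_disjoint_subfamily_covering_enlargement_closedBall S id (rad k)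
      M.toReal (fun a ha => hradle k a ha) 4 (by norm_num)
  choose u hu hdisj hcov using hvit
  -- the measure pieces
  set A : ℕ → EuclideanSpace ℝ (Fin n) → Set (EuclideanSpace ℝ (Fin n)) := fun (k : ℕ) (b : EuclideanSpace ℝ (Fin n)) => (U \ G k) ∩ Metric.closedBall b (rad k b) with hA
  have hAmeas : ∀ k b, MeasurableSet (A k b) :=
    fun k b => (hUmeas.diff (hGmeas k)).inter measurableSet_closedBall
  have hAdisj : ∀ k, (u k).PairwiseDisjoint (A k) := by
    intro k a ha b hb hab
    exact ((hdisj k) ha hb hab).mono inter_subset_right inter_subset_right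
  -- the key lower bound on each piece
  have hAlb : ∀ k, ∀ b ∈ u k, ENNReal.ofReal (rad k b) ≤ 2 * μ (A k b) := by
    intro k b hb
    have hbS : b ∈ S := hu k hb
    have hrb : 0 < rad k b := hradpos k b hbS
    have hinf : Metric.infDist b (G k) = 6 * rad k b := by rw [hrad]; ring
    -- find a point of U close to b
    obtain ⟨q, hqU, hq⟩ : ∃ q ∈ U, dist b q < rad k b / 2 := by
      have := Metric.mem_closure_iff.1 hbS.1 (rad k b / 2) (by positivity)
      exact this
    obtain ⟨j, hqj⟩ := mem_iUnion.1 hqU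
    set j' := max j k with hj'
    have hqj' : q ∈ G j' := hmono (le_max_left j k) hqj
    have hg₀j' : g₀ ∈ G j' := hg₀i j'
    -- distance from q to g₀ is big
    have hbg₀ : 6 * rad k b ≤ dist b g₀ := by
      rw [← hinf]; exact Metric.infDist_le_dist_of_mem (hg₀i k)
    have hqg₀ : rad k b / 2 ≤ dist q g₀ := by
      have := dist_triangle b q g₀
      linarith
    have hkey := key_length (hconn j').isPreconnected hqj' hg₀j' hqg₀
    -- the piece is inside A k b
    have hsub : G j' ∩ Metric.closedBall q (rad k b / 2) ⊆ A k b := by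
      intro w hw
      have hwb : dist w b ≤ rad k b := by
        have h1 : dist w q ≤ rad k b / 2 := Metric.mem_closedBall.1 hw.2
        have := dist_triangle w q b
        rw [dist_comm q b] at this
        linarith
      refine ⟨⟨hGU j' hw.1, ?_⟩, Metric.mem_closedBall.1 hwb⟩
      intro hwk
      have : Metric.infDist b (G k) ≤ dist b w := Metric.infDist_le_dist_of_mem hwk
      rw [hinf, dist_comm] at this
      linarith
    have h1 : ENNReal.ofReal (rad k b / 2) ≤ μ (A k b) :=
      hkey.trans (measure_mono hsub)
    calc ENNReal.ofReal (rad k b) = 2 * ENNReal.ofReal (rad k b / 2) := by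
          rw [← ENNReal.ofReal_ofNat 2, ← ENNReal.ofReal_mul (by norm_num)]
          congr 1; ring
      _ ≤ 2 * μ (A k b) := by gcongr
  -- countability of each u k
  have hucnt : ∀ k, (u k).Countable := by
    intro k
    have h := MeasureTheory.Measure.countable_meas_pos_of_disjoint_of_meas_iUnion_ne_top
      (ι := ↥(u k)) μ (As := fun i => A k i)
      (fun i => hAmeas k i)
      (fun i j hij => hAdisj k i.2 j.2 (Subtype.coe_injective.ne hij))
      (by
        refine ne_top_of_le_ne_top hUfin (measure_mono ?_)
        exact iUnion_subset fun i => inter_subset_left.trans diff_subset)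
    have hall : {i : ↥(u k) | 0 < μ (A k i)} = univ := by
      ext i
      simp only [mem_setOf_eq, mem_univ, iff_true]
      have := hAlb k i i.2
      have hrb : 0 < rad k i := hradpos k i (hu k i.2)
      by_contra hcon
      push_neg at hcon
      rw [le_zero_iff] at hcon
      rw [hcon, mul_zero, le_zero_iff, ENNReal.ofReal_eq_zero] at this
      linarith
    rw [hall] at h
    rw [← Set.countable_coe_iff]
    exact Set.countable_univ_iff.1 h
  -- tendsto of the error
  have heps : Tendsto (fun k => μ (U \ G k)) atTop (𝓝 0) := by
    have h1 : Tendsto (fun k => μ (G k)) atTop (𝓝 (μ U)) :=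
      tendsto_measure_iUnion_atTop hmono
    have h2 : ∀ k, μ (U \ G k) = μ U - μ (G k) := fun k =>
      measure_diff (hGU k) (hGmeas k).nullMeasurableSet
        (ne_top_of_le_ne_top hsup.ne (hGle k))
    simp only [h2]
    have := ENNReal.Tendsto.sub (tendsto_const_nhds (x := μ U)) h1 (Or.inl hUfin)
    simpa using this
  -- Hausdorff measure bound via coverings
  haveI : ∀ k, Countable ↥(u k) := fun k => (hucnt k).to_subtype
  have hdiam : ∀ k, ∀ b ∈ u k,
      EMetric.diam (Metric.closedBall b (4 * rad k b)) ≤ 16 * μ (A k b) := by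
    intro k b hb
    calc EMetric.diam (Metric.closedBall b (4 * rad k b))
        ≤ ENNReal.ofReal (2 * (4 * rad k b)) := diam_cb b _
      _ = 8 * ENNReal.ofReal (rad k b) := by
          rw [← ENNReal.ofReal_ofNat 8, ← ENNReal.ofReal_mul (by norm_num)]
          congr 1; ring
      _ ≤ 8 * (2 * μ (A k b)) := by gcongr; exact hAlb k b hb
      _ = 16 * μ (A k b) := by ring
  have hAle : ∀ k b, μ (A k b) ≤ μ (U \ G k) :=
    fun k b => measure_mono inter_subset_left
  have hconst : Tendsto (fun k => (32 : ℝ≥0∞) * μ (U \ G k)) atTop (𝓝 0) := by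
    simpa using ENNReal.Tendsto.const_mul heps (Or.inr (by norm_num : (32:ℝ≥0∞) ≠ ⊤))
  have hmain : μ S ≤ liminf (fun k => ∑' i : ↥(u k),
      EMetric.diam (Metric.closedBall (i : EuclideanSpace ℝ (Fin n)) (4 * rad k i)) ^ (1:ℝ)) atTop := by
    refine MeasureTheory.Measure.hausdorffMeasure_le_liminf_tsum 1 S (fun k => 32 * μ (U \ G k))
      hconst _ ?_ ?_
    · refine Filter.Eventually.of_forall fun k => fun i => ?_
      calc EMetric.diam (Metric.closedBall (i : EuclideanSpace ℝ (Fin n)) (4 * rad k i))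
          ≤ 16 * μ (A k i) := hdiam k i i.2
        _ ≤ 16 * μ (U \ G k) := by exact mul_le_mul_right (hAle k i) 16
        _ ≤ 32 * μ (U \ G k) := by gcongr <;> norm_num
    · refine Filter.Eventually.of_forall fun k => fun a ha => ?_
      obtain ⟨b, hbu, hball⟩ := hcov k a ha
      refine mem_iUnion.2 ⟨⟨b, hbu⟩, ?_⟩
      exact hball (Metric.mem_closedBall_self (hradpos k a ha).le)
  have hbound2 : ∀ k, (∑' i : ↥(u k),
      EMetric.diam (Metric.closedBall (i : EuclideanSpace ℝ (Fin n)) (4 * rad k i)) ^ (1:ℝ))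
      ≤ 32 * μ (U \ G k) := by
    intro k
    calc (∑' i : ↥(u k),
        EMetric.diam (Metric.closedBall (i : EuclideanSpace ℝ (Fin n)) (4 * rad k i)) ^ (1:ℝ))
        ≤ ∑' i : ↥(u k), 16 * μ (A k i) := by
          refine ENNReal.tsum_le_tsum fun i => ?_
          rw [ENNReal.rpow_one]
          exact hdiam k i i.2
      _ = 16 * ∑' i : ↥(u k), μ (A k i) := ENNReal.tsum_mul_left
      _ = 16 * μ (⋃ b ∈ u k, A k b) := by
          rw [measure_biUnion (hucnt k) (hAdisj k) (fun b _ => hAmeas k b)]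
      _ ≤ 16 * μ (U \ G k) := by
          gcongr
          exact iUnion₂_subset fun b _ => inter_subset_left
      _ ≤ 32 * μ (U \ G k) := by gcongr <;> norm_num
  have hlim : liminf (fun k => ∑' i : ↥(u k),
      EMetric.diam (Metric.closedBall (i : EuclideanSpace ℝ (Fin n)) (4 * rad k i)) ^ (1:ℝ)) atTop
      ≤ liminf (fun k => (32:ℝ≥0∞) * μ (U \ G k)) atTop :=
    Filter.liminf_le_liminf (Filter.Eventually.of_forall hbound2)
  have hzero : liminf (fun k => (32:ℝ≥0∞) * μ (U \ G k)) atTop = 0 := hconst.liminf_eq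
  have : μ S ≤ 0 := by
    calc μ S ≤ _ := hmain
      _ ≤ _ := hlim
      _ = 0 := hzero
  exact le_antisymm this zero_le
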